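/- Cox–Ross–Rubinstein pricing formula for European-style derivatives: let g : ℝ → ℝ be any payoff function. Every predictable self-financing trading strategy whose terminal wealth is V ω = g (S T ω) has initial wealth equal to (1+r)^(−T) * ∑_{x = 0}^{T} (T.choose x) * q^x * (1−q)^(T−x) * g (S0 * (1+u)^x * (1+d)^(T−x)). -/

import Mathlib

open Finset

/-- Stock price at time `t` in the `T`-step CRR binomial model. -/
def crrStock (T : ℕ) (S0 u d : ℝ) (t : ℕ) (ω : Fin T → Bool) : ℝ :=
  S0 * ∏ i ∈ Finset.univ.filter (fun i : Fin T => (i : ℕ) < t),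
    (if ω i then 1 + u else 1 + d)

/-- A trading strategy `(a, b)` is predictable if the holdings chosen at time `t`
depend only on the first `t` coordinates of the trajectory. -/
def crrPredictable {T : ℕ} (a b : Fin T → (Fin T → Bool) → ℝ) : Prop :=
  ∀ (t : Fin T) (ω ω' : Fin T → Bool),
    (∀ i : Fin T, (i : ℕ) < (t : ℕ) → ω i = ω' i) →
      a t ω = a t ω' ∧ b t ω = b t ω'

/-- Self-financing condition for the strategy `(a, b)`. -/
def crrSelfFinancing {T : ℕ} (S0 u d r : ℝ) (a b : Fin T → (Fin T → Bool) → ℝ) : Prop :=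
  ∀ (t : ℕ) (ht : t + 1 < T) (ω : Fin T → Bool),
    a ⟨t, by omega⟩ ω * crrStock T S0 u d (t + 1) ω + b ⟨t, by omega⟩ ω * (1 + r) ^ (t + 1)
      = a ⟨t + 1, ht⟩ ω * crrStock T S0 u d (t + 1) ω + b ⟨t + 1, ht⟩ ω * (1 + r) ^ (t + 1)

/-- Initial wealth of the strategy `(a, b)`. -/
def crrInitialWealth {T : ℕ} (hT : 0 < T) (S0 : ℝ) (a b : Fin T → (Fin T → Bool) → ℝ)
    (ω : Fin T → Bool) : ℝ :=
  a ⟨0, hT⟩ ω * S0 + b ⟨0, hT⟩ ω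

/-- Terminal wealth of the strategy `(a, b)`. -/
def crrTerminalWealth {T : ℕ} (hT : 0 < T) (S0 u d r : ℝ)
    (a b : Fin T → (Fin T → Bool) → ℝ) (ω : Fin T → Bool) : ℝ :=
  a ⟨T - 1, by omega⟩ ω * crrStock T S0 u d T ω + b ⟨T - 1, by omega⟩ ω * (1 + r) ^ T

/-- Number of up-moves in the trajectory `ω`. -/
def crrUps {T : ℕ} (ω : Fin T → Bool) : ℕ :=
  (Finset.univ.filter (fun i : Fin T => ω i = true)).card


/-! ### Auxiliary machinery -/

/-- Risk-neutral weight of a trajectory. -/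
noncomputable def crrWeight (T : ℕ) (q : ℝ) (ω : Fin T → Bool) : ℝ :=
  ∏ i, (if ω i then q else 1 - q)

lemma crrWeight_sum (T : ℕ) (q : ℝ) : ∑ ω : Fin T → Bool, crrWeight T q ω = 1 := by
  unfold crrWeight
  rw [← Fintype.piFinset_univ,
    Finset.sum_prod_piFinset (univ : Finset Bool) (fun (_ : Fin T) c => if c then q else 1 - q)]
  have : ∑ j : Bool, (if j then q else 1 - q) = 1 := by simp
  simp [this]

lemma crrWeight_eq (T : ℕ) (q : ℝ) (ω : Fin T → Bool) :
    crrWeight T q ω = q ^ crrUps ω * (1 - q) ^ (T - crrUps ω) := by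
  unfold crrWeight crrUps
  rw [Finset.prod_ite]
  have h := Finset.card_filter_add_card_filter_not
    (s := (univ : Finset (Fin T))) (p := fun i => ω i = true)
  rw [Finset.card_univ, Fintype.card_fin] at h
  simp only [Finset.prod_const]
  congr 2
  omega

lemma crrStock_top (T : ℕ) (S0 u d : ℝ) (ω : Fin T → Bool) :
    crrStock T S0 u d T ω = S0 * (1 + u) ^ crrUps ω * (1 + d) ^ (T - crrUps ω) := by
  unfold crrStock crrUps
  have hf : (univ.filter (fun i : Fin T => (i : ℕ) < T)) = univ := by
    ext i; simp [i.isLt]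
  rw [hf, Finset.prod_ite]
  have h := Finset.card_filter_add_card_filter_not
    (s := (univ : Finset (Fin T))) (p := fun i => ω i = true)
  rw [Finset.card_univ, Fintype.card_fin] at h
  simp only [Finset.prod_const]
  rw [mul_assoc]
  congr 3
  omega

lemma crr_card_ups (T x : ℕ) :
    ((univ : Finset (Fin T → Bool)).filter (fun ω => crrUps ω = x)).card = T.choose x := by
  rw [show T.choose x = ((univ : Finset (Fin T)).powersetCard x).card by
    rw [Finset.card_powersetCard, Finset.card_univ, Fintype.card_fin]]
  refine Finset.card_bij' (fun ω _ => univ.filter (fun i => ω i = true))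
    (fun s _ => fun i => decide (i ∈ s)) ?_ ?_ ?_ ?_
  · intro ω hω
    simp only [Finset.mem_filter, Finset.mem_univ, true_and] at hω
    simp only [Finset.mem_powersetCard]
    exact ⟨Finset.subset_univ _, hω⟩
  · intro s hs
    simp only [Finset.mem_powersetCard] at hs
    simp only [Finset.mem_filter, Finset.mem_univ, true_and]
    simp only [crrUps]
    rw [show (univ.filter fun i => decide (i ∈ s) = true) = s by ext i; simp]
    exact hs.2
  · intro ω hω; funext i; simp
  · intro s hs; ext i; simp

/-- Split a sum over trajectories at coordinate `t`. -/
lemma crr_sum_split {T : ℕ} (t : Fin T) (F : (Fin T → Bool) → ℝ) :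
    ∑ ω, F ω = ∑ σ : { j : Fin T // j ≠ t } → Bool,
      (F (Function.update ((Equiv.funSplitAt t Bool).symm (false, σ)) t true)
        + F ((Equiv.funSplitAt t Bool).symm (false, σ))) := by
  rw [← Equiv.sum_comp (Equiv.funSplitAt t Bool).symm F, Fintype.sum_prod_type,
    Fintype.sum_bool]
  rw [← Finset.sum_add_distrib]
  refine Finset.sum_congr rfl fun σ _ => ?_
  congr 1
  congr 1
  funext j
  rcases eq_or_ne j t with rfl | h
  · simp [Equiv.funSplitAt_symm_apply]
  · simp [Equiv.funSplitAt_symm_apply, h, Function.update_of_ne h]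

lemma crr_split_base {T : ℕ} (t : Fin T) (σ : { j : Fin T // j ≠ t } → Bool) :
    ((Equiv.funSplitAt t Bool).symm (false, σ)) t = false := by
  simp [Equiv.funSplitAt_symm_apply]

lemma crrStock_succ {T : ℕ} (S0 u d : ℝ) (t : ℕ) (ht : t < T) (ω : Fin T → Bool) :
    crrStock T S0 u d (t + 1) ω
      = crrStock T S0 u d t ω * (if ω ⟨t, ht⟩ then 1 + u else 1 + d) := by
  unfold crrStock
  have hins : (univ.filter (fun i : Fin T => (i : ℕ) < t + 1))
      = insert ⟨t, ht⟩ (univ.filter (fun i : Fin T => (i : ℕ) < t)) := by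
    ext i
    simp only [Finset.mem_filter, Finset.mem_univ, true_and, Finset.mem_insert, Fin.ext_iff]
    omega
  rw [hins, Finset.prod_insert (by simp)]
  ring

lemma crrStock_update {T : ℕ} (S0 u d : ℝ) (t' : ℕ) (t : Fin T) (htt : t' ≤ (t : ℕ))
    (ω : Fin T → Bool) (c : Bool) :
    crrStock T S0 u d t' (Function.update ω t c) = crrStock T S0 u d t' ω := by
  unfold crrStock
  congr 1
  refine Finset.prod_congr rfl fun i hi => ?_
  simp only [Finset.mem_filter] at hi
  rw [Function.update_of_ne (by rintro rfl; omega)]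

/-- One-step martingale property of the discounted wealth process. -/
lemma crr_step {T : ℕ} (S0 u d r q : ℝ)
    (hq : q * (1 + u) + (1 - q) * (1 + d) = 1 + r)
    (a b : Fin T → (Fin T → Bool) → ℝ) (hpred : crrPredictable a b)
    (t : ℕ) (ht : t < T) :
    ∑ ω, crrWeight T q ω *
        (a ⟨t, ht⟩ ω * crrStock T S0 u d (t + 1) ω + b ⟨t, ht⟩ ω * (1 + r) ^ (t + 1))
    = (1 + r) * ∑ ω, crrWeight T q ω *
        (a ⟨t, ht⟩ ω * crrStock T S0 u d t ω + b ⟨t, ht⟩ ω * (1 + r) ^ t) := by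
  set tf : Fin T := ⟨t, ht⟩ with htf
  rw [crr_sum_split tf, crr_sum_split tf, Finset.mul_sum]
  refine Finset.sum_congr rfl fun σ _ => ?_
  set ω0 := (Equiv.funSplitAt tf Bool).symm (false, σ) with hω0
  set ω1 := Function.update ω0 tf true with hω1
  have h0 : ω0 tf = false := crr_split_base tf σ
  have hupd : ∀ (i : Fin T), (i : ℕ) < (tf : ℕ) → ω1 i = ω0 i := by
    intro i hi
    exact Function.update_of_ne (by rintro rfl; omega) _ _
  have ha : a tf ω1 = a tf ω0 := (hpred tf ω1 ω0 hupd).1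
  have hb : b tf ω1 = b tf ω0 := (hpred tf ω1 ω0 hupd).2
  have hS : crrStock T S0 u d t ω1 = crrStock T S0 u d t ω0 :=
    crrStock_update S0 u d t tf le_rfl ω0 true
  set R : ℝ := ∏ i ∈ univ.erase tf, (if ω0 i then q else 1 - q) with hR
  have hW0 : crrWeight T q ω0 = (1 - q) * R := by
    rw [crrWeight, ← Finset.mul_prod_erase univ _ (Finset.mem_univ tf), h0]
    simp [hR]
  have hW1 : crrWeight T q ω1 = q * R := by
    rw [crrWeight, ← Finset.mul_prod_erase univ _ (Finset.mem_univ tf)]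
    rw [hω1, Function.update_self]
    simp only [if_true]
    congr 1
    refine Finset.prod_congr rfl fun i hi => ?_
    rw [Function.update_of_ne (Finset.ne_of_mem_erase hi)]
  have hS1 : crrStock T S0 u d (t + 1) ω1
      = crrStock T S0 u d t ω0 * (1 + u) := by
    rw [crrStock_succ S0 u d t ht, hS]
    rw [show (⟨t, ht⟩ : Fin T) = tf from rfl, hω1, Function.update_self]
    simp
  have hS0' : crrStock T S0 u d (t + 1) ω0
      = crrStock T S0 u d t ω0 * (1 + d) := by
    rw [crrStock_succ S0 u d t ht]
    rw [show (⟨t, ht⟩ : Fin T) = tf from rfl, h0]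
    simp
  rw [hW0, hW1, ha, hb, hS, hS1, hS0', pow_succ]
  linear_combination (R * (a tf ω0 * crrStock T S0 u d t ω0)) * hq

/-- Iterated martingale property. -/
lemma crr_chain {T : ℕ} (S0 u d r q : ℝ)
    (hq : q * (1 + u) + (1 - q) * (1 + d) = 1 + r)
    (a b : Fin T → (Fin T → Bool) → ℝ) (hpred : crrPredictable a b)
    (hsf : crrSelfFinancing S0 u d r a b) (h0 : 0 < T) :
    ∀ (t : ℕ) (ht : t < T),
    ∑ ω, crrWeight T q ω *
        (a ⟨t, ht⟩ ω * crrStock T S0 u d t ω + b ⟨t, ht⟩ ω * (1 + r) ^ t)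
    = (1 + r) ^ t * ∑ ω, crrWeight T q ω *
        (a ⟨0, h0⟩ ω * crrStock T S0 u d 0 ω + b ⟨0, h0⟩ ω * (1 + r) ^ 0) := by
  intro t
  induction t with
  | zero => intro ht; rw [pow_zero, one_mul]
  | succ t ih =>
    intro ht
    have ht' : t < T := by omega
    have hsfrw : ∀ ω : Fin T → Bool,
        a ⟨t + 1, ht⟩ ω * crrStock T S0 u d (t + 1) ω + b ⟨t + 1, ht⟩ ω * (1 + r) ^ (t + 1)
        = a ⟨t, ht'⟩ ω * crrStock T S0 u d (t + 1) ω + b ⟨t, ht'⟩ ω * (1 + r) ^ (t + 1) :=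
      fun ω => (hsf t ht ω).symm
    calc ∑ ω, crrWeight T q ω *
            (a ⟨t + 1, ht⟩ ω * crrStock T S0 u d (t + 1) ω + b ⟨t + 1, ht⟩ ω * (1 + r) ^ (t + 1))
        = ∑ ω, crrWeight T q ω *
            (a ⟨t, ht'⟩ ω * crrStock T S0 u d (t + 1) ω + b ⟨t, ht'⟩ ω * (1 + r) ^ (t + 1)) :=
          Finset.sum_congr rfl fun ω _ => by rw [hsfrw ω]
      _ = (1 + r) * ∑ ω, crrWeight T q ω *
            (a ⟨t, ht'⟩ ω * crrStock T S0 u d t ω + b ⟨t, ht'⟩ ω * (1 + r) ^ t) :=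
          crr_step S0 u d r q hq a b hpred t ht'
      _ = (1 + r) * ((1 + r) ^ t * ∑ ω, crrWeight T q ω *
            (a ⟨0, h0⟩ ω * crrStock T S0 u d 0 ω + b ⟨0, h0⟩ ω * (1 + r) ^ 0)) := by
          rw [ih ht']
      _ = (1 + r) ^ (t + 1) * ∑ ω, crrWeight T q ω *
            (a ⟨0, h0⟩ ω * crrStock T S0 u d 0 ω + b ⟨0, h0⟩ ω * (1 + r) ^ 0) := by
          rw [pow_succ]; ring

/-- the Cox–Ross–Rubinstein pricing formula for a European-style derivative
with payoff `g (S_T)`. -/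
theorem crr_european_pricing_formula
    (T : ℕ) (hT : 0 < T) (S0 u d r : ℝ) (hS0 : 0 < S0)
    (hd : -1 < d) (hdr : d < r) (hru : r < u)
    (g : ℝ → ℝ)
    (a b : Fin T → (Fin T → Bool) → ℝ)
    (hpred : crrPredictable a b) (hsf : crrSelfFinancing S0 u d r a b)
    (hterm : ∀ ω, crrTerminalWealth hT S0 u d r a b ω = g (crrStock T S0 u d T ω)) :
    ∀ ω, crrInitialWealth hT S0 a b ω =
      (1 + r) ^ (-(T : ℤ)) * ∑ x ∈ Finset.range (T + 1),
        (T.choose x : ℝ) * ((r - d) / (u - d)) ^ x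
          * (1 - (r - d) / (u - d)) ^ (T - x)
          * g (S0 * (1 + u) ^ x * (1 + d) ^ (T - x)) := by
  intro ω
  obtain ⟨n, rfl⟩ : ∃ n, T = n + 1 := ⟨T - 1, by omega⟩
  set q : ℝ := (r - d) / (u - d) with hqdef
  have hud : (0:ℝ) < u - d := by linarith
  have hq : q * (1 + u) + (1 - q) * (1 + d) = 1 + r := by
    rw [hqdef]; field_simp; ring
  have hr1 : (0:ℝ) < 1 + r := by linarith
  -- initial wealth
  have hE0 : ∑ ω' : Fin (n+1) → Bool, crrWeight (n+1) q ω' *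
      (a ⟨0, hT⟩ ω' * crrStock (n+1) S0 u d 0 ω' + b ⟨0, hT⟩ ω' * (1 + r) ^ 0)
      = crrInitialWealth hT S0 a b ω := by
    have hpt : ∀ ω' : Fin (n+1) → Bool,
        a ⟨0, hT⟩ ω' * crrStock (n+1) S0 u d 0 ω' + b ⟨0, hT⟩ ω' * (1 + r) ^ 0
        = crrInitialWealth hT S0 a b ω := by
      intro ω'
      have hc := hpred ⟨0, hT⟩ ω' ω (by intro i hi; simp at hi)
      have hst : crrStock (n+1) S0 u d 0 ω' = S0 := by
        unfold crrStock
        rw [show (univ.filter (fun i : Fin (n+1) => (i:ℕ) < 0)) = ∅ by ext i; simp]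
        simp
      rw [hst, hc.1, hc.2, pow_zero, mul_one, crrInitialWealth]
    calc ∑ ω' : Fin (n+1) → Bool, crrWeight (n+1) q ω' *
          (a ⟨0, hT⟩ ω' * crrStock (n+1) S0 u d 0 ω' + b ⟨0, hT⟩ ω' * (1 + r) ^ 0)
        = ∑ ω' : Fin (n+1) → Bool, crrWeight (n+1) q ω' * crrInitialWealth hT S0 a b ω :=
          Finset.sum_congr rfl fun ω' _ => by rw [hpt ω']
      _ = (∑ ω' : Fin (n+1) → Bool, crrWeight (n+1) q ω') * crrInitialWealth hT S0 a b ω := by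
          rw [Finset.sum_mul]
      _ = crrInitialWealth hT S0 a b ω := by rw [crrWeight_sum, one_mul]
  -- terminal expectation equals compounded initial wealth
  have hkey : ∑ ω' : Fin (n+1) → Bool, crrWeight (n+1) q ω' * g (crrStock (n+1) S0 u d (n+1) ω')
      = (1 + r) ^ (n + 1) * crrInitialWealth hT S0 a b ω := by
    calc ∑ ω' : Fin (n+1) → Bool, crrWeight (n+1) q ω' * g (crrStock (n+1) S0 u d (n+1) ω')
        = ∑ ω' : Fin (n+1) → Bool, crrWeight (n+1) q ω' * crrTerminalWealth hT S0 u d r a b ω' :=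
          Finset.sum_congr rfl fun ω' _ => by rw [hterm ω']
      _ = ∑ ω' : Fin (n+1) → Bool, crrWeight (n+1) q ω' *
            (a ⟨n, by omega⟩ ω' * crrStock (n+1) S0 u d (n+1) ω'
              + b ⟨n, by omega⟩ ω' * (1 + r) ^ (n + 1)) := by
          refine Finset.sum_congr rfl fun ω' _ => ?_
          rw [crrTerminalWealth]
          norm_num
      _ = (1 + r) * ∑ ω' : Fin (n+1) → Bool, crrWeight (n+1) q ω' *
            (a ⟨n, by omega⟩ ω' * crrStock (n+1) S0 u d n ω'
              + b ⟨n, by omega⟩ ω' * (1 + r) ^ n) :=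
          crr_step S0 u d r q hq a b hpred n (by omega)
      _ = (1 + r) * ((1 + r) ^ n * ∑ ω' : Fin (n+1) → Bool, crrWeight (n+1) q ω' *
            (a ⟨0, hT⟩ ω' * crrStock (n+1) S0 u d 0 ω' + b ⟨0, hT⟩ ω' * (1 + r) ^ 0)) := by
          rw [crr_chain S0 u d r q hq a b hpred hsf hT n (by omega)]
      _ = (1 + r) ^ (n + 1) * crrInitialWealth hT S0 a b ω := by
          rw [hE0, pow_succ]; ring
  -- counting trajectories with a given number of up-moves
  have hcount : ∑ ω' : Fin (n+1) → Bool, crrWeight (n+1) q ω' * g (crrStock (n+1) S0 u d (n+1) ω')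
      = ∑ x ∈ Finset.range (n + 1 + 1), ((n+1).choose x : ℝ) * q ^ x * (1 - q) ^ (n + 1 - x)
          * g (S0 * (1 + u) ^ x * (1 + d) ^ (n + 1 - x)) := by
    calc ∑ ω' : Fin (n+1) → Bool, crrWeight (n+1) q ω' * g (crrStock (n+1) S0 u d (n+1) ω')
        = ∑ ω' : Fin (n+1) → Bool,
            (fun x => q ^ x * (1 - q) ^ (n + 1 - x) * g (S0 * (1 + u) ^ x * (1 + d) ^ (n + 1 - x)))
              (crrUps ω') :=
          Finset.sum_congr rfl fun ω' _ => by
            rw [crrWeight_eq, crrStock_top]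
      _ = ∑ x ∈ Finset.range (n + 1 + 1), ∑ ω' ∈ univ.filter (fun ω' => crrUps ω' = x),
            (fun x => q ^ x * (1 - q) ^ (n + 1 - x) * g (S0 * (1 + u) ^ x * (1 + d) ^ (n + 1 - x))) x := by
          rw [Finset.sum_fiberwise_of_maps_to' (fun ω' _ => ?_)]
          simp only [Finset.mem_range]
          calc crrUps ω' ≤ (univ : Finset (Fin (n+1))).card := Finset.card_filter_le _ _
            _ < n + 1 + 1 := by simp
      _ = ∑ x ∈ Finset.range (n + 1 + 1), ((n+1).choose x : ℝ) * q ^ x * (1 - q) ^ (n + 1 - x)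
            * g (S0 * (1 + u) ^ x * (1 + d) ^ (n + 1 - x)) := by
          refine Finset.sum_congr rfl fun x _ => ?_
          rw [Finset.sum_const, crr_card_ups, nsmul_eq_mul]
          ring
  rw [← hcount, hkey, zpow_neg, zpow_natCast,
    inv_mul_cancel_left₀ (pow_ne_zero _ hr1.ne')]
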